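/- Let R be a commutative ℚ-algebra and F a formal group law over R. Then there exists a unique power series ℓ ∈ R[[X]] with constant term 0 and linear coefficient 1 such that ℓ(F(X,Y)) = ℓ(X) + ℓ(Y) in R[[X,Y]]. In other words, over a ℚ-algebra every formal group law is strictly isomorphic to the additive formal group law G_a(X,Y) = X + Y. -/

import Mathlib

namespace FGL

variable {R : Type*} [CommRing R]

/-- `subst2 F a b` is the substitution `F(a,b)` of the power series `a`, `b`
(with zero constant term) into the two-variable power series `F`. -/
noncomputable def subst2 {σ : Type*} (F : MvPowerSeries (Fin 2) R)
    (a b : MvPowerSeries σ R) : MvPowerSeries σ R :=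
  fun d =>
    ∑ ij ∈ Finset.range ((d.sum fun _ k => k) + 1) ×ˢ
        Finset.range ((d.sum fun _ k => k) + 1),
      MvPowerSeries.coeff (Finsupp.single 0 ij.1 + Finsupp.single 1 ij.2) F *
        MvPowerSeries.coeff d (a ^ ij.1 * b ^ ij.2)

/-- `subst1 f G` is the substitution `f(G)` of the power series `G`
(with zero constant term) into the one-variable power series `f`. -/
noncomputable def subst1 {σ : Type*} (f : PowerSeries R) (G : MvPowerSeries σ R) :
    MvPowerSeries σ R :=
  fun d =>
    ∑ n ∈ Finset.range ((d.sum fun _ k => k) + 1),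
      PowerSeries.coeff n f * MvPowerSeries.coeff d (G ^ n)

/-- Composition `f(g)` of one-variable power series (`g` with zero constant term). -/
noncomputable def pcomp (f g : PowerSeries R) : PowerSeries R := subst1 f g

/-- A formal group law over `R`: a two-variable power series `F(X,Y)` with
`F(X,0) = X`, `F(0,Y) = Y`, `F(X,Y) = F(Y,X)` and `F(F(X,Y),Z) = F(X,F(Y,Z))`. -/
structure IsFGL (F : MvPowerSeries (Fin 2) R) : Prop where
  unit_left : subst2 F (MvPowerSeries.X 0) 0 = MvPowerSeries.X 0
  unit_right : subst2 F 0 (MvPowerSeries.X 1) = MvPowerSeries.X 1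
  comm : subst2 F (MvPowerSeries.X 1) (MvPowerSeries.X 0) = F
  assoc : subst2 F (subst2 F (MvPowerSeries.X 0) (MvPowerSeries.X 1))
        (MvPowerSeries.X 2 : MvPowerSeries (Fin 3) R)
      = subst2 F (MvPowerSeries.X 0) (subst2 F (MvPowerSeries.X 1) (MvPowerSeries.X 2))

/-- A homomorphism `f : F → G` of formal group laws: a one-variable power series with
zero constant term such that `f(F(X,Y)) = G(f(X), f(Y))`. -/
structure IsHom (F G : MvPowerSeries (Fin 2) R) (f : PowerSeries R) : Prop where
  const : PowerSeries.constantCoeff f = 0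
  hom : subst1 f F =
    subst2 G (subst1 f (MvPowerSeries.X 0)) (subst1 f (MvPowerSeries.X 1))

/-- The coefficientwise Frobenius twist `F^{(p)}`. -/
noncomputable def frob (p : ℕ) (F : MvPowerSeries (Fin 2) R) : MvPowerSeries (Fin 2) R :=
  fun d => (MvPowerSeries.coeff d F) ^ p

/-- The one-variable power series `F_Y(X,0)`, whose coefficient of `X^n` is the
coefficient of `X^n Y` in `F`. -/
noncomputable def FY0 (F : MvPowerSeries (Fin 2) R) : PowerSeries R :=
  PowerSeries.mk fun n =>
    MvPowerSeries.coeff (Finsupp.single 0 n + Finsupp.single 1 1) F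

/-- The formal partial derivative `F_X(X,Y)` with respect to the first variable. -/
noncomputable def FX (F : MvPowerSeries (Fin 2) R) : MvPowerSeries (Fin 2) R :=
  fun d => ((d 0 + 1 : ℕ) : R) * MvPowerSeries.coeff (d + Finsupp.single 0 1) F

/-- The `n`-series `[n]_F` of a formal group law, defined by `[0]_F = 0` and
`[n+1]_F(X) = F([n]_F(X), X)`. -/
noncomputable def nSeries (F : MvPowerSeries (Fin 2) R) : ℕ → PowerSeries R
  | 0 => 0
  | n + 1 => subst2 F (nSeries F n) PowerSeries.X


/-! ### Infrastructure: degree and order of multivariate power series -/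

open MvPowerSeries Finset

/-- total degree of an exponent -/
def deg {σ : Type*} (d : σ →₀ ℕ) : ℕ := d.sum fun _ k => k

lemma deg_add {σ : Type*} (d e : σ →₀ ℕ) : deg (d + e) = deg d + deg e :=
  Finsupp.sum_add_index' (fun _ => rfl) (fun _ _ _ => rfl)

@[simp] lemma deg_zero {σ : Type*} : deg (0 : σ →₀ ℕ) = 0 := Finsupp.sum_zero_index

@[simp] lemma deg_single {σ : Type*} (i : σ) (k : ℕ) : deg (Finsupp.single i k) = k :=
  Finsupp.sum_single_index rfl

lemma eq_zero_of_deg_eq_zero {σ : Type*} {d : σ →₀ ℕ} (h : deg d = 0) : d = 0 := by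
  ext i
  by_contra hi
  have hmem : i ∈ d.support := Finsupp.mem_support_iff.2 (by simpa using hi)
  have := (Finset.sum_eq_zero_iff.1 h) i hmem
  simp at this
  exact hi (by simpa using this)

/-- `ordGe n f` : all coefficients in total degree `< n` vanish. -/
def ordGe {σ : Type*} (n : ℕ) (f : MvPowerSeries σ R) : Prop :=
  ∀ d, deg d < n → MvPowerSeries.coeff d f = 0

lemma ordGe_mono {σ : Type*} {m n : ℕ} (h : m ≤ n) {f : MvPowerSeries σ R}
    (hf : ordGe n f) : ordGe m f := fun d hd => hf d (lt_of_lt_of_le hd h)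

lemma ordGe_zero {σ : Type*} (f : MvPowerSeries σ R) : ordGe 0 f := fun _ h => by omega

lemma ordGe_of_constantCoeff {σ : Type*} {f : MvPowerSeries σ R}
    (hf : MvPowerSeries.constantCoeff f = 0) : ordGe 1 f := by
  intro d hd
  have : d = 0 := eq_zero_of_deg_eq_zero (by omega)
  subst this
  simpa [MvPowerSeries.coeff_zero_eq_constantCoeff] using hf

lemma ordGe_mul {σ : Type*} {m n : ℕ} {f g : MvPowerSeries σ R}
    (hf : ordGe m f) (hg : ordGe n g) : ordGe (m + n) (f * g) := by
  classical
  intro d hd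
  rw [MvPowerSeries.coeff_mul]
  apply Finset.sum_eq_zero
  intro p hp
  have hsum : p.1 + p.2 = d := Finset.HasAntidiagonal.mem_antidiagonal.1 hp
  have hdeg : deg p.1 + deg p.2 = deg d := by rw [← deg_add, hsum]
  rcases lt_or_ge (deg p.1) m with h1 | h1
  · rw [hf p.1 h1, zero_mul]
  · rw [hg p.2 (by omega), mul_zero]

lemma ordGe_pow {σ : Type*} {f : MvPowerSeries σ R} (hf : ordGe 1 f) (n : ℕ) :
    ordGe n (f ^ n) := by
  induction n with
  | zero => exact ordGe_zero _
  | succ k ih => rw [pow_succ]; exact ordGe_mul ih hf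

lemma ordGe_pow_mul_pow {σ : Type*} {f g : MvPowerSeries σ R} (hf : ordGe 1 f)
    (hg : ordGe 1 g) (i j : ℕ) : ordGe (i + j) (f ^ i * g ^ j) :=
  ordGe_mul (ordGe_pow hf i) (ordGe_pow hg j)

lemma ordGe_add {σ : Type*} {n : ℕ} {f g : MvPowerSeries σ R}
    (hf : ordGe n f) (hg : ordGe n g) : ordGe n (f + g) := by
  intro d hd
  rw [map_add, hf d hd, hg d hd, add_zero]

lemma ordGe_neg {σ : Type*} {n : ℕ} {f : MvPowerSeries σ R}
    (hf : ordGe n f) : ordGe n (-f) := by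
  intro d hd; rw [map_neg, hf d hd, neg_zero]

lemma ordGe_sub {σ : Type*} {n : ℕ} {f g : MvPowerSeries σ R}
    (hf : ordGe n f) (hg : ordGe n g) : ordGe n (f - g) := by
  rw [sub_eq_add_neg]; exact ordGe_add hf (ordGe_neg hg)

lemma ordGe_X {σ : Type*} [DecidableEq σ] (i : σ) :
    ordGe 1 (MvPowerSeries.X i : MvPowerSeries σ R) :=
  ordGe_of_constantCoeff (MvPowerSeries.constantCoeff_X i)

lemma ordGe_pow_sub_pow {σ : Type*} {u u' : MvPowerSeries σ R} (hu : ordGe 1 u)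
    (hu' : ordGe 1 u') (h : ordGe 2 (u - u')) (i : ℕ) :
    ordGe (i + 1) (u ^ i - u' ^ i) := by
  induction i with
  | zero => simpa using ordGe_of_constantCoeff (by simp)
  | succ k ih =>
    have key : u ^ (k+1) - u' ^ (k+1) = u * (u ^ k - u' ^ k) + (u - u') * u' ^ k := by
      ring
    rw [key]
    apply ordGe_add
    · exact ordGe_mono (by omega) (ordGe_mul hu ih)
    · exact ordGe_mono (by omega) (ordGe_mul h (ordGe_pow hu' k))

lemma coeff_pow_mul_pow_congr {σ : Type*} {u u' v v' : MvPowerSeries σ R}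
    (hu : ordGe 1 u) (hu' : ordGe 1 u') (huu : ordGe 2 (u - u'))
    (hv : ordGe 1 v) (hv' : ordGe 1 v') (hvv : ordGe 2 (v - v'))
    {d : σ →₀ ℕ} {i j : ℕ} (h : deg d ≤ i + j) :
    MvPowerSeries.coeff d (u ^ i * v ^ j) = MvPowerSeries.coeff d (u' ^ i * v' ^ j) := by
  have key : u ^ i * v ^ j - u' ^ i * v' ^ j
      = (u ^ i - u' ^ i) * v ^ j + u' ^ i * (v ^ j - v' ^ j) := by ring
  have h1 : ordGe (i + j + 1) (u ^ i * v ^ j - u' ^ i * v' ^ j) := by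
    rw [key]
    apply ordGe_add
    · exact ordGe_mono (by omega) (ordGe_mul (ordGe_pow_sub_pow hu hu' huu i) (ordGe_pow hv j))
    · exact ordGe_mono (by omega) (ordGe_mul (ordGe_pow hu' i) (ordGe_pow_sub_pow hv hv' hvv j))
  have := h1 d (by omega)
  rw [map_sub] at this
  exact sub_eq_zero.1 this

/-! ### exponents in `Fin 2` and `Fin 3` -/

/-- exponent `(i,j)` in `Fin 2` -/
noncomputable def e2 (i j : ℕ) : Fin 2 →₀ ℕ := Finsupp.single 0 i + Finsupp.single 1 j

@[simp] lemma e2_apply0 (i j : ℕ) : e2 i j 0 = i := by simp [e2, Finsupp.single_apply]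
@[simp] lemma e2_apply1 (i j : ℕ) : e2 i j 1 = j := by simp [e2, Finsupp.single_apply]

lemma eq_e2 (d : Fin 2 →₀ ℕ) : d = e2 (d 0) (d 1) := by
  ext x
  match x with
  | 0 => simp
  | 1 => simp

lemma e2_inj {i j k l : ℕ} (h : e2 i j = e2 k l) : i = k ∧ j = l :=
  ⟨by simpa using congrArg (fun f => f 0) h, by simpa using congrArg (fun f => f 1) h⟩

@[simp] lemma deg_e2 (i j : ℕ) : deg (e2 i j) = i + j := by
  rw [e2, deg_add, deg_single, deg_single]

@[simp] lemma e2_zero_zero : e2 0 0 = 0 := by simp [e2]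

/-- exponent `(a,b,c)` in `Fin 3` -/
noncomputable def e3 (a b c : ℕ) : Fin 3 →₀ ℕ :=
  Finsupp.single 0 a + Finsupp.single 1 b + Finsupp.single 2 c

@[simp] lemma e3_apply0 (a b c : ℕ) : e3 a b c 0 = a := by simp [e3, Finsupp.single_apply]
@[simp] lemma e3_apply1 (a b c : ℕ) : e3 a b c 1 = b := by simp [e3, Finsupp.single_apply]
@[simp] lemma e3_apply2 (a b c : ℕ) : e3 a b c 2 = c := by simp [e3, Finsupp.single_apply]

lemma eq_e3 (d : Fin 3 →₀ ℕ) : d = e3 (d 0) (d 1) (d 2) := by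
  ext x
  match x with
  | 0 => simp
  | 1 => simp
  | 2 => simp

@[simp] lemma deg_e3 (a b c : ℕ) : deg (e3 a b c) = a + b + c := by
  rw [e3, deg_add, deg_add, deg_single, deg_single, deg_single]

/-! ### Coefficients of the substitution operations -/

lemma coeff_subst2_def {σ : Type*} (F : MvPowerSeries (Fin 2) R) (a b : MvPowerSeries σ R)
    (d : σ →₀ ℕ) :
    MvPowerSeries.coeff d (subst2 F a b) =
      ∑ ij ∈ Finset.range (deg d + 1) ×ˢ Finset.range (deg d + 1),
        MvPowerSeries.coeff (e2 ij.1 ij.2) F * MvPowerSeries.coeff d (a ^ ij.1 * b ^ ij.2) :=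
  rfl

lemma coeff_subst1_def {σ : Type*} (f : PowerSeries R) (G : MvPowerSeries σ R) (d : σ →₀ ℕ) :
    MvPowerSeries.coeff d (subst1 f G) =
      ∑ n ∈ Finset.range (deg d + 1),
        PowerSeries.coeff n f * MvPowerSeries.coeff d (G ^ n) :=
  rfl

/-- Master formula for `subst2` with any sufficiently large truncation bound. -/
lemma coeff_subst2 {σ : Type*} (F : MvPowerSeries (Fin 2) R) {a b : MvPowerSeries σ R}
    (ha : MvPowerSeries.constantCoeff a = 0) (hb : MvPowerSeries.constantCoeff b = 0)
    {d : σ →₀ ℕ} {N : ℕ} (hN : deg d ≤ N) :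
    MvPowerSeries.coeff d (subst2 F a b) =
      ∑ ij ∈ Finset.range (N + 1) ×ˢ Finset.range (N + 1),
        MvPowerSeries.coeff (e2 ij.1 ij.2) F * MvPowerSeries.coeff d (a ^ ij.1 * b ^ ij.2) := by
  rw [coeff_subst2_def]
  apply Finset.sum_subset
  · exact Finset.product_subset_product
      (Finset.range_subset_range.2 (by omega)) (Finset.range_subset_range.2 (by omega))
  · intro ij hin hnot
    simp only [Finset.mem_product, Finset.mem_range] at hin hnot
    have hd : deg d < ij.1 + ij.2 := by omega
    rw [ordGe_pow_mul_pow (ordGe_of_constantCoeff ha) (ordGe_of_constantCoeff hb)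
      ij.1 ij.2 d hd, mul_zero]

/-- Master formula for `subst1` with any sufficiently large truncation bound. -/
lemma coeff_subst1 {σ : Type*} (f : PowerSeries R) {G : MvPowerSeries σ R}
    (hG : MvPowerSeries.constantCoeff G = 0)
    {d : σ →₀ ℕ} {N : ℕ} (hN : deg d ≤ N) :
    MvPowerSeries.coeff d (subst1 f G) =
      ∑ n ∈ Finset.range (N + 1),
        PowerSeries.coeff n f * MvPowerSeries.coeff d (G ^ n) := by
  rw [coeff_subst1_def]
  apply Finset.sum_subset (Finset.range_subset_range.2 (by omega))
  intro n hin hnot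
  simp only [Finset.mem_range] at hin hnot
  rw [ordGe_pow (ordGe_of_constantCoeff hG) n d (by omega), mul_zero]

lemma constantCoeff_subst2 {σ : Type*} (F : MvPowerSeries (Fin 2) R)
    (a b : MvPowerSeries σ R) :
    MvPowerSeries.constantCoeff (subst2 F a b) = MvPowerSeries.coeff 0 F := by
  rw [← MvPowerSeries.coeff_zero_eq_constantCoeff, coeff_subst2_def]
  simp

lemma constantCoeff_subst1 {σ : Type*} (f : PowerSeries R) (G : MvPowerSeries σ R) :
    MvPowerSeries.constantCoeff (subst1 f G) = PowerSeries.constantCoeff f := by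
  rw [← MvPowerSeries.coeff_zero_eq_constantCoeff, coeff_subst1_def]
  simp [PowerSeries.constantCoeff]

lemma subst2_add {σ : Type*} (P Q : MvPowerSeries (Fin 2) R) (a b : MvPowerSeries σ R) :
    subst2 (P + Q) a b = subst2 P a b + subst2 Q a b := by
  funext d
  show (MvPowerSeries.coeff d) (subst2 (P+Q) a b)
    = (MvPowerSeries.coeff d) (subst2 P a b) + (MvPowerSeries.coeff d) (subst2 Q a b)
  simp only [coeff_subst2_def, map_add, add_mul, Finset.sum_add_distrib]

lemma subst1_add {σ : Type*} (f g : PowerSeries R) (G : MvPowerSeries σ R) :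
    subst1 (f + g) G = subst1 f G + subst1 g G := by
  funext d
  show (MvPowerSeries.coeff d) (subst1 (f+g) G)
    = (MvPowerSeries.coeff d) (subst1 f G) + (MvPowerSeries.coeff d) (subst1 g G)
  simp only [coeff_subst1_def, map_add, add_mul, Finset.sum_add_distrib]

lemma subst1_sub {σ : Type*} (f g : PowerSeries R) (G : MvPowerSeries σ R) :
    subst1 (f - g) G = subst1 f G - subst1 g G := by
  funext d
  show (MvPowerSeries.coeff d) (subst1 (f-g) G)
    = (MvPowerSeries.coeff d) (subst1 f G) - (MvPowerSeries.coeff d) (subst1 g G)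
  simp only [coeff_subst1_def, map_sub, sub_mul, Finset.sum_sub_distrib]

/-! ### A polynomial model for truncated substitution -/

lemma apply_le_deg {σ : Type*} (d : σ →₀ ℕ) (i : σ) : d i ≤ deg d := by
  by_cases hi : i ∈ d.support
  · exact Finset.single_le_sum (fun _ _ => Nat.zero_le _) hi
  · simp [Finsupp.notMem_support_iff.1 hi]

lemma deg_fin2 (d : Fin 2 →₀ ℕ) : deg d = d 0 + d 1 := by
  conv_lhs => rw [eq_e2 d]
  rw [deg_e2]

/-- total-degree-box truncation of a two-variable power series, as a polynomial -/
noncomputable def T (N : ℕ) (P : MvPowerSeries (Fin 2) R) : MvPolynomial (Fin 2) R :=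
  ∑ ij ∈ Finset.range (N + 1) ×ˢ Finset.range (N + 1),
    MvPolynomial.monomial (e2 ij.1 ij.2) (MvPowerSeries.coeff (e2 ij.1 ij.2) P)

lemma coeff_T (N : ℕ) (P : MvPowerSeries (Fin 2) R) (u : Fin 2 →₀ ℕ) :
    (T N P).coeff u = if u 0 ≤ N ∧ u 1 ≤ N then MvPowerSeries.coeff u P else 0 := by
  rw [T, MvPolynomial.coeff_sum]
  by_cases hx : u 0 ≤ N ∧ u 1 ≤ N
  · rw [if_pos hx, Finset.sum_eq_single (u 0, u 1)]
    · rw [MvPolynomial.coeff_monomial, if_pos (eq_e2 u).symm]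
      rw [← eq_e2 u]
    · intro ij _ hne
      rw [MvPolynomial.coeff_monomial, if_neg]
      intro he
      apply hne
      obtain ⟨h1, h2⟩ := e2_inj (he.trans (eq_e2 u))
      exact Prod.ext h1 h2
    · intro hnot
      exfalso
      exact hnot (by simp [Finset.mem_product, Nat.lt_succ_iff, hx.1, hx.2])
  · rw [if_neg hx]
    apply Finset.sum_eq_zero
    intro ij hij
    rw [MvPolynomial.coeff_monomial, if_neg]
    intro he
    simp only [Finset.mem_product, Finset.mem_range, Nat.lt_succ_iff] at hij
    apply hx
    rw [← he]
    simpa using ⟨hij.1, hij.2⟩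

lemma T_ordGe (N : ℕ) (P : MvPowerSeries (Fin 2) R) :
    ordGe (N + 1) (P - (T N P : MvPowerSeries (Fin 2) R)) := by
  intro u hu
  have h0 : u 0 ≤ N := le_trans (apply_le_deg u 0) (by omega)
  have h1 : u 1 ≤ N := le_trans (apply_le_deg u 1) (by omega)
  rw [map_sub, MvPolynomial.coeff_coe, coeff_T, if_pos ⟨h0, h1⟩, sub_self]

lemma coeff_mul_T (N : ℕ) (P Q : MvPowerSeries (Fin 2) R) {u : Fin 2 →₀ ℕ}
    (hu : deg u ≤ N) :
    MvPowerSeries.coeff u (P * Q) =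
      MvPowerSeries.coeff u ((T N P : MvPowerSeries (Fin 2) R) * (T N Q : MvPowerSeries (Fin 2) R)) := by
  have key : P * Q - (T N P : MvPowerSeries (Fin 2) R) * (T N Q : MvPowerSeries (Fin 2) R)
      = (P - T N P) * Q + (T N P : MvPowerSeries (Fin 2) R) * (Q - T N Q) := by ring
  have h2 : ordGe (N + 1) (P * Q - (T N P : MvPowerSeries (Fin 2) R) * (T N Q : MvPowerSeries (Fin 2) R)) := by
    rw [key]
    apply ordGe_add
    · simpa using ordGe_mul (T_ordGe N P) (ordGe_zero Q)
    · simpa using ordGe_mul (ordGe_zero (T N P : MvPowerSeries (Fin 2) R)) (T_ordGe N Q)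
  have := h2 u (by omega)
  rw [map_sub] at this
  exact sub_eq_zero.1 this

lemma coeff_aeval {σ : Type*} (p : MvPolynomial (Fin 2) R) (a b : MvPowerSeries σ R)
    (d : σ →₀ ℕ) :
    MvPowerSeries.coeff d (MvPolynomial.aeval ![a, b] p) =
      ∑ u ∈ p.support, p.coeff u * MvPowerSeries.coeff d (a ^ u 0 * b ^ u 1) := by
  conv_lhs => rw [MvPolynomial.as_sum p]
  rw [map_sum, map_sum]
  apply Finset.sum_congr rfl
  intro u _
  rw [MvPolynomial.aeval_monomial, Finsupp.prod_pow, Fin.prod_univ_two]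
  rw [← Algebra.smul_def, map_smul, smul_eq_mul]
  simp

lemma coeff_aeval_congr {σ : Type*} {p q : MvPolynomial (Fin 2) R} {a b : MvPowerSeries σ R}
    (ha : MvPowerSeries.constantCoeff a = 0) (hb : MvPowerSeries.constantCoeff b = 0)
    {d : σ →₀ ℕ} {N : ℕ} (hd : deg d ≤ N)
    (h : ∀ u : Fin 2 →₀ ℕ, deg u ≤ N → p.coeff u = q.coeff u) :
    MvPowerSeries.coeff d (MvPolynomial.aeval ![a, b] p) =
      MvPowerSeries.coeff d (MvPolynomial.aeval ![a, b] q) := by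
  rw [coeff_aeval, coeff_aeval]
  have e1 : ∑ u ∈ p.support, p.coeff u * MvPowerSeries.coeff d (a ^ u 0 * b ^ u 1)
      = ∑ u ∈ p.support ∪ q.support, p.coeff u * MvPowerSeries.coeff d (a ^ u 0 * b ^ u 1) := by
    apply Finset.sum_subset Finset.subset_union_left
    intro u _ hnot
    rw [MvPolynomial.notMem_support_iff.1 hnot, zero_mul]
  have e2' : ∑ u ∈ q.support, q.coeff u * MvPowerSeries.coeff d (a ^ u 0 * b ^ u 1)
      = ∑ u ∈ p.support ∪ q.support, q.coeff u * MvPowerSeries.coeff d (a ^ u 0 * b ^ u 1) := by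
    apply Finset.sum_subset Finset.subset_union_right
    intro u _ hnot
    rw [MvPolynomial.notMem_support_iff.1 hnot, zero_mul]
  rw [e1, e2']
  apply Finset.sum_congr rfl
  intro u _
  rcases le_or_gt (deg u) N with h1 | h1
  · rw [h u h1]
  · have : deg d < u 0 + u 1 := by rw [← deg_fin2]; omega
    rw [ordGe_pow_mul_pow (ordGe_of_constantCoeff ha) (ordGe_of_constantCoeff hb)
      (u 0) (u 1) d this, mul_zero, mul_zero]

lemma coeff_subst2_eq_aeval {σ : Type*} (P : MvPowerSeries (Fin 2) R)
    {a b : MvPowerSeries σ R}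
    (ha : MvPowerSeries.constantCoeff a = 0) (hb : MvPowerSeries.constantCoeff b = 0)
    {d : σ →₀ ℕ} {N : ℕ} (hd : deg d ≤ N) :
    MvPowerSeries.coeff d (subst2 P a b) =
      MvPowerSeries.coeff d (MvPolynomial.aeval ![a, b] (T N P)) := by
  classical
  rw [coeff_subst2 P ha hb hd, coeff_aeval]
  have himg : (T N P).support ⊆ Finset.image (fun ij : ℕ × ℕ => e2 ij.1 ij.2)
      (Finset.range (N + 1) ×ˢ Finset.range (N + 1)) := by
    intro u hu
    have hcoeff := MvPolynomial.mem_support_iff.1 hu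
    rw [coeff_T] at hcoeff
    by_cases hbox : u 0 ≤ N ∧ u 1 ≤ N
    · refine Finset.mem_image.2 ⟨(u 0, u 1), ?_, (eq_e2 u).symm⟩
      simp [Finset.mem_product, Nat.lt_succ_iff, hbox.1, hbox.2]
    · rw [if_neg hbox] at hcoeff
      exact absurd rfl hcoeff
  have hvanish : ∀ u ∈ Finset.image (fun ij : ℕ × ℕ => e2 ij.1 ij.2)
      (Finset.range (N + 1) ×ˢ Finset.range (N + 1)), u ∉ (T N P).support →
      (T N P).coeff u * MvPowerSeries.coeff d (a ^ u 0 * b ^ u 1) = 0 := by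
    intro u _ hnot
    rw [MvPolynomial.notMem_support_iff.1 hnot, zero_mul]
  rw [Finset.sum_subset himg hvanish]
  have hinj : ∀ x ∈ Finset.range (N + 1) ×ˢ Finset.range (N + 1),
      ∀ y ∈ Finset.range (N + 1) ×ˢ Finset.range (N + 1),
      (fun ij : ℕ × ℕ => e2 ij.1 ij.2) x = (fun ij : ℕ × ℕ => e2 ij.1 ij.2) y → x = y := by
    intro x _ y _ hxy
    obtain ⟨h1, h2⟩ := e2_inj hxy
    exact Prod.ext h1 h2
  rw [Finset.sum_image hinj]
  apply Finset.sum_congr rfl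
  intro ij hij
  simp only [Finset.mem_product, Finset.mem_range, Nat.lt_succ_iff] at hij
  rw [coeff_T, e2_apply0, e2_apply1, if_pos ⟨hij.1, hij.2⟩]

/-! ### `subst2` is multiplicative in the outer series -/

lemma subst2_one {σ : Type*} {a b : MvPowerSeries σ R} :
    subst2 (1 : MvPowerSeries (Fin 2) R) a b = 1 := by
  classical
  apply MvPowerSeries.ext
  intro d
  rw [coeff_subst2_def, Finset.sum_eq_single (0, 0)]
  · simp [MvPowerSeries.coeff_one]
  · intro ij _ hne
    rw [MvPowerSeries.coeff_one, if_neg, zero_mul]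
    intro h
    apply hne
    obtain ⟨h1, h2⟩ := e2_inj (h.trans e2_zero_zero.symm)
    exact Prod.ext h1 h2
  · intro h
    exact absurd (by simp) h

lemma subst2_mul {σ : Type*} (P Q : MvPowerSeries (Fin 2) R) {a b : MvPowerSeries σ R}
    (ha : MvPowerSeries.constantCoeff a = 0)
    (hb : MvPowerSeries.constantCoeff b = 0) :
    subst2 (P * Q) a b = subst2 P a b * subst2 Q a b := by
  classical
  apply MvPowerSeries.ext
  intro d
  rw [coeff_subst2_eq_aeval (P * Q) ha hb (le_refl (deg d))]
  have hrhs : MvPowerSeries.coeff d (subst2 P a b * subst2 Q a b)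
      = MvPowerSeries.coeff d
        ((MvPolynomial.aeval ![a, b] (T (deg d) P)) * (MvPolynomial.aeval ![a, b] (T (deg d) Q))) := by
    rw [MvPowerSeries.coeff_mul, MvPowerSeries.coeff_mul]
    apply Finset.sum_congr rfl
    intro p hp
    have hsum : p.1 + p.2 = d := Finset.HasAntidiagonal.mem_antidiagonal.1 hp
    have hdeg : deg p.1 + deg p.2 = deg d := by rw [← deg_add, hsum]
    rw [coeff_subst2_eq_aeval P ha hb (N := deg d) (by omega),
      coeff_subst2_eq_aeval Q ha hb (N := deg d) (by omega)]
  rw [hrhs, ← map_mul]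
  apply coeff_aeval_congr ha hb (le_refl (deg d))
  intro u hu
  have h0 : u 0 ≤ deg d := le_trans (apply_le_deg u 0) hu
  have h1 : u 1 ≤ deg d := le_trans (apply_le_deg u 1) hu
  rw [coeff_T, if_pos ⟨h0, h1⟩]
  rw [← MvPolynomial.coeff_coe, MvPolynomial.coe_mul, ← coeff_mul_T (deg d) P Q hu]

lemma subst2_pow {σ : Type*} (P : MvPowerSeries (Fin 2) R) {a b : MvPowerSeries σ R}
    (ha : MvPowerSeries.constantCoeff a = 0)
    (hb : MvPowerSeries.constantCoeff b = 0) (n : ℕ) :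
    subst2 (P ^ n) a b = (subst2 P a b) ^ n := by
  induction n with
  | zero => simpa using subst2_one
  | succ k ih => rw [pow_succ, pow_succ, subst2_mul _ _ ha hb, ih]

/-! ### Composition laws -/

lemma subst1_subst2 {σ : Type*} (f : PowerSeries R) (F : MvPowerSeries (Fin 2) R)
    (hF : MvPowerSeries.coeff 0 F = 0) {U V : MvPowerSeries σ R}
    (hU : MvPowerSeries.constantCoeff U = 0)
    (hV : MvPowerSeries.constantCoeff V = 0) :
    subst1 f (subst2 F U V) = subst2 (subst1 f F) U V := by
  classical
  apply MvPowerSeries.ext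
  intro d
  set N := deg d with hN
  have hW : MvPowerSeries.constantCoeff (subst2 F U V) = 0 := by
    rw [constantCoeff_subst2]; exact hF
  have hFord : ordGe 1 F := ordGe_of_constantCoeff hF
  rw [coeff_subst1 f hW (le_refl N), coeff_subst2 (subst1 f F) hU hV (le_refl N)]
  have step1 : ∀ ij ∈ Finset.range (N + 1) ×ˢ Finset.range (N + 1),
      MvPowerSeries.coeff (e2 ij.1 ij.2) (subst1 f F) * MvPowerSeries.coeff d (U ^ ij.1 * V ^ ij.2)
      = ∑ n ∈ Finset.range (2 * N + 1),
          PowerSeries.coeff n f * MvPowerSeries.coeff (e2 ij.1 ij.2) (F ^ n)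
            * MvPowerSeries.coeff d (U ^ ij.1 * V ^ ij.2) := by
    intro ij hij
    simp only [Finset.mem_product, Finset.mem_range, Nat.lt_succ_iff] at hij
    rw [coeff_subst1 f (by simpa [MvPowerSeries.coeff_zero_eq_constantCoeff] using hF)
      (N := 2 * N) (by rw [deg_e2]; omega), Finset.sum_mul]
  rw [Finset.sum_congr rfl step1, Finset.sum_comm]
  have step2 : ∀ n ∈ Finset.range (2 * N + 1),
      (∑ ij ∈ Finset.range (N + 1) ×ˢ Finset.range (N + 1),
        PowerSeries.coeff n f * MvPowerSeries.coeff (e2 ij.1 ij.2) (F ^ n)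
          * MvPowerSeries.coeff d (U ^ ij.1 * V ^ ij.2))
      = PowerSeries.coeff n f * MvPowerSeries.coeff d ((subst2 F U V) ^ n) := by
    intro n _
    rw [← subst2_pow F hU hV n, coeff_subst2 (F ^ n) hU hV (le_refl N), Finset.mul_sum]
    apply Finset.sum_congr rfl
    intro ij _
    ring
  rw [Finset.sum_congr rfl step2]
  apply Finset.sum_subset (Finset.range_subset_range.2 (by omega))
  intro n hn hnot
  simp only [Finset.mem_range] at hn hnot
  have hWord : ordGe 1 (subst2 F U V) := ordGe_of_constantCoeff hW
  rw [ordGe_pow hWord n d (by omega), mul_zero]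

lemma coeff_subst1_X {σ : Type*} [DecidableEq σ] (f : PowerSeries R) (s : σ) (u : σ →₀ ℕ) :
    MvPowerSeries.coeff u (subst1 f (MvPowerSeries.X s)) =
      if u = Finsupp.single s (deg u) then PowerSeries.coeff (deg u) f else 0 := by
  rw [coeff_subst1_def, Finset.sum_eq_single (deg u)]
  · rw [MvPowerSeries.coeff_X_pow]
    by_cases h : u = Finsupp.single s (deg u)
    · rw [if_pos h, if_pos h, mul_one]
    · rw [if_neg h, if_neg h, mul_zero]
  · intro n _ hne
    rw [MvPowerSeries.coeff_X_pow, if_neg, mul_zero]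
    intro h
    apply hne
    rw [h, deg_single]
  · intro h
    exact absurd (Finset.mem_range.2 (by omega)) h

lemma subst2_subst1_X0 {σ : Type*} (f : PowerSeries R) {U V : MvPowerSeries σ R}
    (hU : MvPowerSeries.constantCoeff U = 0)
    (hV : MvPowerSeries.constantCoeff V = 0) :
    subst2 (subst1 f (MvPowerSeries.X 0 : MvPowerSeries (Fin 2) R)) U V = subst1 f U := by
  classical
  apply MvPowerSeries.ext
  intro d
  set N := deg d with hN
  rw [coeff_subst2 _ hU hV (le_refl N), coeff_subst1 f hU (le_refl N)]
  rw [Finset.sum_product]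
  have inner : ∀ i ∈ Finset.range (N + 1),
      (∑ j ∈ Finset.range (N + 1),
        MvPowerSeries.coeff (e2 i j) (subst1 f (MvPowerSeries.X 0))
          * MvPowerSeries.coeff d (U ^ i * V ^ j))
      = PowerSeries.coeff i f * MvPowerSeries.coeff d (U ^ i) := by
    intro i _
    rw [Finset.sum_eq_single 0]
    · rw [coeff_subst1_X, deg_e2, Nat.add_zero]
      rw [if_pos (by ext x; match x with | 0 => simp | 1 => simp)]
      rw [pow_zero, mul_one]
    · intro j _ hj
      rw [coeff_subst1_X, if_neg, zero_mul]
      intro h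
      apply hj
      have := congrArg (fun g => g 1) h
      simpa [Finsupp.single_apply] using this
    · intro h
      exact absurd (Finset.mem_range.2 (by omega)) h
  exact Finset.sum_congr rfl inner

lemma subst2_subst1_X1 {σ : Type*} (f : PowerSeries R) {U V : MvPowerSeries σ R}
    (hU : MvPowerSeries.constantCoeff U = 0)
    (hV : MvPowerSeries.constantCoeff V = 0) :
    subst2 (subst1 f (MvPowerSeries.X 1 : MvPowerSeries (Fin 2) R)) U V = subst1 f V := by
  classical
  apply MvPowerSeries.ext
  intro d
  set N := deg d with hN
  rw [coeff_subst2 _ hU hV (le_refl N), coeff_subst1 f hV (le_refl N)]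
  rw [Finset.sum_product_right]
  have inner : ∀ j ∈ Finset.range (N + 1),
      (∑ i ∈ Finset.range (N + 1),
        MvPowerSeries.coeff (e2 i j) (subst1 f (MvPowerSeries.X 1))
          * MvPowerSeries.coeff d (U ^ i * V ^ j))
      = PowerSeries.coeff j f * MvPowerSeries.coeff d (V ^ j) := by
    intro j _
    rw [Finset.sum_eq_single 0]
    · rw [coeff_subst1_X, deg_e2, Nat.zero_add]
      rw [if_pos (by ext x; match x with | 0 => simp | 1 => simp)]
      rw [pow_zero, one_mul]
    · intro i _ hi
      rw [coeff_subst1_X, if_neg, zero_mul]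
      intro h
      apply hi
      have := congrArg (fun g => g 0) h
      simpa [Finsupp.single_apply] using this
    · intro h
      exact absurd (Finset.mem_range.2 (by omega)) h
  exact Finset.sum_congr rfl inner

/-! ### more small lemmas -/

lemma subst2_sub {σ : Type*} (P Q : MvPowerSeries (Fin 2) R) (a b : MvPowerSeries σ R) :
    subst2 (P - Q) a b = subst2 P a b - subst2 Q a b := by
  funext d
  show (MvPowerSeries.coeff d) (subst2 (P - Q) a b)
    = (MvPowerSeries.coeff d) (subst2 P a b) - (MvPowerSeries.coeff d) (subst2 Q a b)
  simp only [coeff_subst2_def, map_sub, sub_mul, Finset.sum_sub_distrib]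

lemma ordGe_zero_series {σ : Type*} (n : ℕ) : ordGe n (0 : MvPowerSeries σ R) := by
  intro d _; simp

lemma subst1_zero {σ : Type*} {f : PowerSeries R} (hf : PowerSeries.constantCoeff f = 0) :
    subst1 f (0 : MvPowerSeries σ R) = 0 := by
  apply MvPowerSeries.ext
  intro d
  rw [coeff_subst1_def, map_zero]
  apply Finset.sum_eq_zero
  intro n _
  match n with
  | 0 =>
    rw [pow_zero]
    have : PowerSeries.coeff 0 f = 0 := by
      rw [PowerSeries.coeff_zero_eq_constantCoeff]; exact hf
    rw [this, zero_mul]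
  | m + 1 =>
    rw [zero_pow (by omega), map_zero, mul_zero]

lemma coeff_pow_congr {σ : Type*} {u u' : MvPowerSeries σ R}
    (hu : ordGe 1 u) (hu' : ordGe 1 u') (huu : ordGe 2 (u - u'))
    {d : σ →₀ ℕ} {i : ℕ} (h : deg d ≤ i) :
    MvPowerSeries.coeff d (u ^ i) = MvPowerSeries.coeff d (u' ^ i) := by
  have := coeff_pow_mul_pow_congr hu hu' huu hu hu' huu
    (d := d) (i := i) (j := 0) (by omega)
  simpa using this

lemma e2_inj_iff {a b a' b' : ℕ} : e2 a b = e2 a' b' ↔ a = a' ∧ b = b' := by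
  constructor
  · exact e2_inj
  · rintro ⟨rfl, rfl⟩; rfl

lemma e3_inj_iff {a b c a' b' c' : ℕ} : e3 a b c = e3 a' b' c' ↔ a = a' ∧ b = b' ∧ c = c' := by
  constructor
  · intro h
    refine ⟨?_, ?_, ?_⟩
    · simpa using congrArg (fun g => g 0) h
    · simpa using congrArg (fun g => g 1) h
    · simpa using congrArg (fun g => g 2) h
  · rintro ⟨rfl, rfl, rfl⟩; rfl

/-! ### coefficients of binomial powers -/

lemma X_pow_mul_X_pow_eq {σ : Type*} (s t : σ) (i j : ℕ) :
    (MvPowerSeries.X s : MvPowerSeries σ R) ^ i * (MvPowerSeries.X t) ^ j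
      = MvPowerSeries.monomial (Finsupp.single s i + Finsupp.single t j) 1 := by
  rw [MvPowerSeries.X_pow_eq, MvPowerSeries.X_pow_eq, MvPowerSeries.monomial_mul_monomial, one_mul]

/-- coefficient of `(X₀+X₁)^i X₂^j` in `Fin 3` -/
lemma coeff_B2 (i j a b c : ℕ) :
    MvPowerSeries.coeff (e3 a b c) ((MvPowerSeries.X 0 + MvPowerSeries.X 1 : MvPowerSeries (Fin 3) R) ^ i
      * (MvPowerSeries.X 2) ^ j)
    = if a + b = i ∧ c = j then (i.choose a : R) else 0 := by
  classical
  have expand : (MvPowerSeries.X 0 + MvPowerSeries.X 1 : MvPowerSeries (Fin 3) R) ^ i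
      * (MvPowerSeries.X 2) ^ j
      = ∑ k ∈ Finset.range (i + 1), (i.choose k) • (MvPowerSeries.monomial (e3 k (i - k) j) 1) := by
    rw [add_pow, Finset.sum_mul]
    apply Finset.sum_congr rfl
    intro k _
    have hmon : (MvPowerSeries.X 0 : MvPowerSeries (Fin 3) R) ^ k * (MvPowerSeries.X 1) ^ (i - k)
        * (MvPowerSeries.X 2) ^ j = MvPowerSeries.monomial (e3 k (i - k) j) 1 := by
      rw [MvPowerSeries.X_pow_eq, MvPowerSeries.X_pow_eq, MvPowerSeries.X_pow_eq,
        MvPowerSeries.monomial_mul_monomial, MvPowerSeries.monomial_mul_monomial, one_mul, one_mul]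
      rfl
    rw [show (MvPowerSeries.X 0 : MvPowerSeries (Fin 3) R) ^ k * (MvPowerSeries.X 1) ^ (i - k)
        * ((i.choose k : ℕ) : MvPowerSeries (Fin 3) R) * (MvPowerSeries.X 2) ^ j
      = ((i.choose k : ℕ) : MvPowerSeries (Fin 3) R)
        * ((MvPowerSeries.X 0) ^ k * (MvPowerSeries.X 1) ^ (i - k) * (MvPowerSeries.X 2) ^ j) from by ring,
      hmon, ← nsmul_eq_mul]
  rw [expand, map_sum]
  by_cases hai : a ≤ i
  · rw [Finset.sum_eq_single_of_mem a (Finset.mem_range.2 (by omega))]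
    · rw [map_nsmul, MvPowerSeries.coeff_monomial]
      by_cases hcond : a + b = i ∧ c = j
      · rw [if_pos (e3_inj_iff.2 ⟨rfl, by omega, hcond.2⟩), if_pos hcond]
        simp
      · rw [if_neg, if_neg hcond, smul_zero]
        intro h
        obtain ⟨_, h2, h3⟩ := e3_inj_iff.1 h
        exact hcond ⟨by omega, h3⟩
    · intro k _ hk
      rw [map_nsmul, MvPowerSeries.coeff_monomial, if_neg, smul_zero]
      intro h
      exact hk (e3_inj_iff.1 h).1.symm
  · rw [Finset.sum_eq_zero, if_neg (by omega)]
    intro k hk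
    rw [map_nsmul, MvPowerSeries.coeff_monomial, if_neg, smul_zero]
    intro h
    have := (e3_inj_iff.1 h).1
    simp only [Finset.mem_range] at hk
    omega

/-- coefficient of `X₀^i (X₁+X₂)^j` in `Fin 3` -/
lemma coeff_B3 (i j a b c : ℕ) :
    MvPowerSeries.coeff (e3 a b c) ((MvPowerSeries.X 0 : MvPowerSeries (Fin 3) R) ^ i
      * (MvPowerSeries.X 1 + MvPowerSeries.X 2) ^ j)
    = if a = i ∧ b + c = j then (j.choose b : R) else 0 := by
  classical
  have expand : (MvPowerSeries.X 0 : MvPowerSeries (Fin 3) R) ^ i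
      * (MvPowerSeries.X 1 + MvPowerSeries.X 2) ^ j
      = ∑ k ∈ Finset.range (j + 1), (j.choose k) • (MvPowerSeries.monomial (e3 i k (j - k)) 1) := by
    rw [add_pow, Finset.mul_sum]
    apply Finset.sum_congr rfl
    intro k _
    have hmon : (MvPowerSeries.X 0 : MvPowerSeries (Fin 3) R) ^ i * (MvPowerSeries.X 1) ^ k
        * (MvPowerSeries.X 2) ^ (j - k) = MvPowerSeries.monomial (e3 i k (j - k)) 1 := by
      rw [MvPowerSeries.X_pow_eq, MvPowerSeries.X_pow_eq, MvPowerSeries.X_pow_eq,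
        MvPowerSeries.monomial_mul_monomial, MvPowerSeries.monomial_mul_monomial, one_mul, one_mul]
      rfl
    rw [show (MvPowerSeries.X 0 : MvPowerSeries (Fin 3) R) ^ i
        * ((MvPowerSeries.X 1) ^ k * (MvPowerSeries.X 2) ^ (j - k) * ((j.choose k : ℕ) : MvPowerSeries (Fin 3) R))
      = ((j.choose k : ℕ) : MvPowerSeries (Fin 3) R)
        * ((MvPowerSeries.X 0) ^ i * (MvPowerSeries.X 1) ^ k * (MvPowerSeries.X 2) ^ (j - k)) from by ring,
      hmon, ← nsmul_eq_mul]
  rw [expand, map_sum]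
  by_cases hbj : b ≤ j
  · rw [Finset.sum_eq_single_of_mem b (Finset.mem_range.2 (by omega))]
    · rw [map_nsmul, MvPowerSeries.coeff_monomial]
      by_cases hcond : a = i ∧ b + c = j
      · rw [if_pos (e3_inj_iff.2 ⟨hcond.1, rfl, by omega⟩), if_pos hcond]
        simp
      · rw [if_neg, if_neg hcond, smul_zero]
        intro h
        obtain ⟨h1, _, h3⟩ := e3_inj_iff.1 h
        exact hcond ⟨h1, by omega⟩
    · intro k _ hk
      rw [map_nsmul, MvPowerSeries.coeff_monomial, if_neg, smul_zero]
      intro h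
      exact hk (e3_inj_iff.1 h).2.1.symm
  · rw [Finset.sum_eq_zero, if_neg (by omega)]
    intro k hk
    rw [map_nsmul, MvPowerSeries.coeff_monomial, if_neg, smul_zero]
    intro h
    have := (e3_inj_iff.1 h).2.1
    simp only [Finset.mem_range] at hk
    omega

/-- coefficient of `X₀^i X₁^j` in `Fin 3` -/
lemma coeff_B4 (i j a b c : ℕ) :
    MvPowerSeries.coeff (e3 a b c) ((MvPowerSeries.X 0 : MvPowerSeries (Fin 3) R) ^ i
      * (MvPowerSeries.X 1) ^ j)
    = if a = i ∧ b = j ∧ c = 0 then 1 else 0 := by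
  classical
  rw [X_pow_mul_X_pow_eq, MvPowerSeries.coeff_monomial]
  have : (Finsupp.single (0 : Fin 3) i + Finsupp.single 1 j) = e3 i j 0 := by
    rw [e3, Finsupp.single_zero, add_zero]
  rw [this]
  by_cases h : a = i ∧ b = j ∧ c = 0
  · rw [if_pos (e3_inj_iff.2 h), if_pos h]
  · rw [if_neg, if_neg h]
    intro hh
    exact h (e3_inj_iff.1 hh)

/-- coefficient of `X₁^i X₂^j` in `Fin 3` -/
lemma coeff_B5 (i j a b c : ℕ) :
    MvPowerSeries.coeff (e3 a b c) ((MvPowerSeries.X 1 : MvPowerSeries (Fin 3) R) ^ i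
      * (MvPowerSeries.X 2) ^ j)
    = if a = 0 ∧ b = i ∧ c = j then 1 else 0 := by
  classical
  rw [X_pow_mul_X_pow_eq, MvPowerSeries.coeff_monomial]
  have : (Finsupp.single (1 : Fin 3) i + Finsupp.single 2 j) = e3 0 i j := by
    rw [e3, Finsupp.single_zero, zero_add]
  rw [this]
  by_cases h : a = 0 ∧ b = i ∧ c = j
  · rw [if_pos (e3_inj_iff.2 h), if_pos h]
  · rw [if_neg, if_neg h]
    intro hh
    exact h (e3_inj_iff.1 hh)

/-- coefficient of `(X₀+X₁)^n` in `Fin 2` -/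
lemma coeff_B1 (n a b : ℕ) :
    MvPowerSeries.coeff (e2 a b) ((MvPowerSeries.X 0 + MvPowerSeries.X 1 : MvPowerSeries (Fin 2) R) ^ n)
    = if a + b = n then (n.choose a : R) else 0 := by
  classical
  have expand : (MvPowerSeries.X 0 + MvPowerSeries.X 1 : MvPowerSeries (Fin 2) R) ^ n
      = ∑ k ∈ Finset.range (n + 1), (n.choose k) • (MvPowerSeries.monomial (e2 k (n - k)) 1) := by
    rw [add_pow]
    apply Finset.sum_congr rfl
    intro k _
    have hmon : (MvPowerSeries.X 0 : MvPowerSeries (Fin 2) R) ^ k * (MvPowerSeries.X 1) ^ (n - k)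
        = MvPowerSeries.monomial (e2 k (n - k)) 1 := by
      rw [X_pow_mul_X_pow_eq]; rfl
    rw [show (MvPowerSeries.X 0 : MvPowerSeries (Fin 2) R) ^ k * (MvPowerSeries.X 1) ^ (n - k)
        * ((n.choose k : ℕ) : MvPowerSeries (Fin 2) R)
      = ((n.choose k : ℕ) : MvPowerSeries (Fin 2) R)
        * ((MvPowerSeries.X 0) ^ k * (MvPowerSeries.X 1) ^ (n - k)) from by ring,
      hmon, ← nsmul_eq_mul]
  rw [expand, map_sum]
  by_cases han : a ≤ n
  · rw [Finset.sum_eq_single_of_mem a (Finset.mem_range.2 (by omega))]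
    · rw [map_nsmul, MvPowerSeries.coeff_monomial]
      by_cases hcond : a + b = n
      · rw [if_pos (e2_inj_iff.2 ⟨rfl, by omega⟩), if_pos hcond]
        simp
      · rw [if_neg, if_neg hcond, smul_zero]
        intro h
        obtain ⟨_, h2⟩ := e2_inj_iff.1 h
        omega
    · intro k _ hk
      rw [map_nsmul, MvPowerSeries.coeff_monomial, if_neg, smul_zero]
      intro h
      exact hk (e2_inj_iff.1 h).1.symm
  · rw [Finset.sum_eq_zero, if_neg (by omega)]
    intro k hk
    rw [map_nsmul, MvPowerSeries.coeff_monomial, if_neg, smul_zero]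
    intro h
    have := (e2_inj_iff.1 h).1
    simp only [Finset.mem_range] at hk
    omega

/-- coefficient of `X₀^k` in `Fin 2` -/
lemma coeff_B6 (k a b : ℕ) :
    MvPowerSeries.coeff (e2 a b) ((MvPowerSeries.X 0 : MvPowerSeries (Fin 2) R) ^ k)
    = if a = k ∧ b = 0 then 1 else 0 := by
  classical
  rw [MvPowerSeries.coeff_X_pow]
  have : (Finsupp.single (0 : Fin 2) k) = e2 k 0 := by
    rw [e2, Finsupp.single_zero, add_zero]
  rw [this]
  by_cases h : a = k ∧ b = 0
  · rw [if_pos (e2_inj_iff.2 h), if_pos h]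
  · rw [if_neg, if_neg h]
    intro hh
    exact h (e2_inj_iff.1 hh)

/-- coefficient of `X₁^k` in `Fin 2` -/
lemma coeff_B7 (k a b : ℕ) :
    MvPowerSeries.coeff (e2 a b) ((MvPowerSeries.X 1 : MvPowerSeries (Fin 2) R) ^ k)
    = if a = 0 ∧ b = k then 1 else 0 := by
  classical
  rw [MvPowerSeries.coeff_X_pow]
  have : (Finsupp.single (1 : Fin 2) k) = e2 0 k := by
    rw [e2, Finsupp.single_zero, zero_add]
  rw [this]
  by_cases h : a = 0 ∧ b = k
  · rw [if_pos (e2_inj_iff.2 h), if_pos h]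
  · rw [if_neg, if_neg h]
    intro hh
    exact h (e2_inj_iff.1 hh)

/-! ### Coefficient facts from the formal group law axioms -/

lemma coeff_subst2_X_zero {σ : Type*} [DecidableEq σ] (s : σ) (P : MvPowerSeries (Fin 2) R) (n : ℕ) :
    MvPowerSeries.coeff (Finsupp.single s n)
      (subst2 P (MvPowerSeries.X s) (0 : MvPowerSeries σ R)) =
    MvPowerSeries.coeff (e2 n 0) P := by
  rw [coeff_subst2 P (MvPowerSeries.constantCoeff_X s) (map_zero _) (N := n)
    (by rw [deg_single])]
  rw [Finset.sum_eq_single (n, 0)]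
  · rw [pow_zero, mul_one, MvPowerSeries.coeff_X_pow, if_pos rfl, mul_one]
  · rintro ⟨i, j⟩ _ hne
    match j with
    | 0 =>
      rw [pow_zero, mul_one, MvPowerSeries.coeff_X_pow, if_neg, mul_zero]
      intro h
      apply hne
      have : n = i := by simpa [Finsupp.single_apply] using congrArg (fun g => g s) h
      simp [this]
    | m + 1 =>
      rw [zero_pow (by omega), mul_zero, map_zero, mul_zero]
  · intro h
    exact absurd (by simp [Finset.mem_product]) h

lemma coeff_subst2_zero_X {σ : Type*} [DecidableEq σ] (t : σ) (P : MvPowerSeries (Fin 2) R) (n : ℕ) :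
    MvPowerSeries.coeff (Finsupp.single t n)
      (subst2 P (0 : MvPowerSeries σ R) (MvPowerSeries.X t)) =
    MvPowerSeries.coeff (e2 0 n) P := by
  rw [coeff_subst2 P (map_zero _) (MvPowerSeries.constantCoeff_X t) (N := n)
    (by rw [deg_single])]
  rw [Finset.sum_eq_single (0, n)]
  · rw [pow_zero, one_mul, MvPowerSeries.coeff_X_pow, if_pos rfl, mul_one]
  · rintro ⟨i, j⟩ _ hne
    match i with
    | 0 =>
      rw [pow_zero, one_mul, MvPowerSeries.coeff_X_pow, if_neg, mul_zero]
      intro h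
      apply hne
      have : n = j := by simpa [Finsupp.single_apply] using congrArg (fun g => g t) h
      simp [this]
    | m + 1 =>
      rw [zero_pow (by omega), zero_mul, map_zero, mul_zero]
  · intro h
    exact absurd (by simp [Finset.mem_product]) h

variable {F : MvPowerSeries (Fin 2) R}

lemma F_coeff_n0 (hF : IsFGL F) (n : ℕ) :
    MvPowerSeries.coeff (e2 n 0) F = if n = 1 then 1 else 0 := by
  classical
  rw [← coeff_subst2_X_zero (0 : ℕ) F n, hF.unit_left,
    ← pow_one (MvPowerSeries.X 0 : MvPowerSeries ℕ R), MvPowerSeries.coeff_X_pow]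
  by_cases h : n = 1
  · subst h; rw [if_pos rfl, if_pos rfl]
  · rw [if_neg, if_neg h]
    intro hh
    have : n = 1 := by simpa [Finsupp.single_apply] using congrArg (fun g => g (0 : ℕ)) hh
    exact h this

lemma F_coeff_0n (hF : IsFGL F) (n : ℕ) :
    MvPowerSeries.coeff (e2 0 n) F = if n = 1 then 1 else 0 := by
  classical
  rw [← coeff_subst2_zero_X (1 : ℕ) F n, hF.unit_right,
    ← pow_one (MvPowerSeries.X 1 : MvPowerSeries ℕ R), MvPowerSeries.coeff_X_pow]
  by_cases h : n = 1
  · subst h; rw [if_pos rfl, if_pos rfl]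
  · rw [if_neg, if_neg h]
    intro hh
    have : n = 1 := by simpa [Finsupp.single_apply] using congrArg (fun g => g (1 : ℕ)) hh
    exact h this

lemma F_coeff_zero (hF : IsFGL F) : MvPowerSeries.coeff 0 F = 0 := by
  have := F_coeff_n0 hF 0
  rw [e2_zero_zero] at this
  simpa using this

lemma F_coeff_10 (hF : IsFGL F) : MvPowerSeries.coeff (e2 1 0) F = 1 := by
  simpa using F_coeff_n0 hF 1

lemma F_coeff_01 (hF : IsFGL F) : MvPowerSeries.coeff (e2 0 1) F = 1 := by
  simpa using F_coeff_0n hF 1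

/-- substitution of two order-≥1 series into `F` agrees with `a + b` to order 2 -/
lemma subst2_sub_linear (hF : IsFGL F) {σ : Type*} {a b : MvPowerSeries σ R}
    (ha : MvPowerSeries.constantCoeff a = 0)
    (hb : MvPowerSeries.constantCoeff b = 0) :
    ordGe 2 (subst2 F a b - (a + b)) := by
  intro u hu
  have h11 : MvPowerSeries.coeff u (a ^ 1 * b ^ 1) = 0 :=
    ordGe_pow_mul_pow (ordGe_of_constantCoeff ha) (ordGe_of_constantCoeff hb) 1 1 u (by omega)
  rw [map_sub, coeff_subst2 F ha hb (N := 1) (by omega)]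
  rw [show Finset.range 2 ×ˢ Finset.range 2 = ({(0,0), (0,1), (1,0), (1,1)} : Finset (ℕ × ℕ))
    from by decide]
  rw [Finset.sum_insert (by decide), Finset.sum_insert (by decide),
    Finset.sum_insert (by decide), Finset.sum_singleton]
  rw [e2_zero_zero, F_coeff_zero hF, zero_mul, F_coeff_10 hF, F_coeff_01 hF, h11, mul_zero]
  rw [pow_one, pow_one, pow_zero, pow_zero, one_mul, mul_one, one_mul, one_mul, map_add]
  ring

/-! ### Extraction of coefficients from substituted series in three variables -/

lemma ordGe_sub_self {σ : Type*} (n : ℕ) (f : MvPowerSeries σ R) : ordGe n (f - f) := by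
  intro d _; simp

lemma extract1 (P : MvPowerSeries (Fin 2) R) {n : ℕ}
    (hP : ∀ e : Fin 2 →₀ ℕ, deg e < n → MvPowerSeries.coeff e P = 0)
    {a b c : ℕ} (habc : a + b + c = n) {G' : MvPowerSeries (Fin 3) R}
    (hG'const : MvPowerSeries.constantCoeff G' = 0)
    (hlin : ordGe 2 (G' - (MvPowerSeries.X 0 + MvPowerSeries.X 1))) :
    MvPowerSeries.coeff (e3 a b c) (subst2 P G' (MvPowerSeries.X 2)) =
      ((a + b).choose a : R) * MvPowerSeries.coeff (e2 (a + b) c) P := by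
  classical
  have hordG : ordGe 1 G' := ordGe_of_constantCoeff hG'const
  have hordL : ordGe 1 (MvPowerSeries.X 0 + MvPowerSeries.X 1 : MvPowerSeries (Fin 3) R) :=
    ordGe_add (ordGe_X 0) (ordGe_X 1)
  rw [coeff_subst2 P hG'const (MvPowerSeries.constantCoeff_X 2) (N := n)
    (by rw [deg_e3]; try omega)]
  rw [Finset.sum_eq_single (a + b, c)]
  · have hcongr : MvPowerSeries.coeff (e3 a b c) (G' ^ (a + b) * (MvPowerSeries.X 2) ^ c)
        = MvPowerSeries.coeff (e3 a b c)
            ((MvPowerSeries.X 0 + MvPowerSeries.X 1 : MvPowerSeries (Fin 3) R) ^ (a + b)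
              * (MvPowerSeries.X 2) ^ c) :=
      coeff_pow_mul_pow_congr hordG hordL hlin (ordGe_X 2) (ordGe_X 2)
        (ordGe_sub_self 2 _) (by rw [deg_e3]; try omega)
    rw [hcongr, coeff_B2, if_pos ⟨rfl, rfl⟩, mul_comm]
  · rintro ⟨i, j⟩ hmem hne
    simp only [Finset.mem_product, Finset.mem_range, Nat.lt_succ_iff] at hmem
    rcases lt_trichotomy (i + j) n with hlt | heq | hgt
    · rw [hP (e2 i j) (by rw [deg_e2]; try omega), zero_mul]
    · have hcongr : MvPowerSeries.coeff (e3 a b c) (G' ^ i * (MvPowerSeries.X 2) ^ j)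
          = MvPowerSeries.coeff (e3 a b c)
              ((MvPowerSeries.X 0 + MvPowerSeries.X 1 : MvPowerSeries (Fin 3) R) ^ i
                * (MvPowerSeries.X 2) ^ j) :=
        coeff_pow_mul_pow_congr hordG hordL hlin (ordGe_X 2) (ordGe_X 2)
          (ordGe_sub_self 2 _) (by rw [deg_e3]; try omega)
      rw [hcongr, coeff_B2, if_neg, mul_zero]
      rintro ⟨h1, h2⟩
      exact hne (by rw [← h1, ← h2])
    · rw [ordGe_pow_mul_pow hordG (ordGe_X 2) i j (e3 a b c) (by rw [deg_e3]; try omega), mul_zero]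
  · intro h
    exact absurd (by simp only [Finset.mem_product, Finset.mem_range]; omega) h

lemma extract2 (P : MvPowerSeries (Fin 2) R) {n : ℕ}
    (hP : ∀ e : Fin 2 →₀ ℕ, deg e < n → MvPowerSeries.coeff e P = 0)
    {a b c : ℕ} (habc : a + b + c = n) {H' : MvPowerSeries (Fin 3) R}
    (hH'const : MvPowerSeries.constantCoeff H' = 0)
    (hlin : ordGe 2 (H' - (MvPowerSeries.X 1 + MvPowerSeries.X 2))) :
    MvPowerSeries.coeff (e3 a b c) (subst2 P (MvPowerSeries.X 0) H') =
      ((b + c).choose b : R) * MvPowerSeries.coeff (e2 a (b + c)) P := by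
  classical
  have hordH : ordGe 1 H' := ordGe_of_constantCoeff hH'const
  have hordL : ordGe 1 (MvPowerSeries.X 1 + MvPowerSeries.X 2 : MvPowerSeries (Fin 3) R) :=
    ordGe_add (ordGe_X 1) (ordGe_X 2)
  rw [coeff_subst2 P (MvPowerSeries.constantCoeff_X 0) hH'const (N := n)
    (by rw [deg_e3]; try omega)]
  rw [Finset.sum_eq_single (a, b + c)]
  · have hcongr : MvPowerSeries.coeff (e3 a b c) ((MvPowerSeries.X 0) ^ a * H' ^ (b + c))
        = MvPowerSeries.coeff (e3 a b c)
            ((MvPowerSeries.X 0 : MvPowerSeries (Fin 3) R) ^ a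
              * (MvPowerSeries.X 1 + MvPowerSeries.X 2) ^ (b + c)) :=
      coeff_pow_mul_pow_congr (ordGe_X 0) (ordGe_X 0)
        (ordGe_sub_self 2 _) hordH hordL hlin (by rw [deg_e3]; try omega)
    rw [hcongr, coeff_B3, if_pos ⟨rfl, rfl⟩, mul_comm]
  · rintro ⟨i, j⟩ hmem hne
    simp only [Finset.mem_product, Finset.mem_range, Nat.lt_succ_iff] at hmem
    rcases lt_trichotomy (i + j) n with hlt | heq | hgt
    · rw [hP (e2 i j) (by rw [deg_e2]; try omega), zero_mul]
    · have hcongr : MvPowerSeries.coeff (e3 a b c) ((MvPowerSeries.X 0) ^ i * H' ^ j)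
          = MvPowerSeries.coeff (e3 a b c)
              ((MvPowerSeries.X 0 : MvPowerSeries (Fin 3) R) ^ i
                * (MvPowerSeries.X 1 + MvPowerSeries.X 2) ^ j) :=
        coeff_pow_mul_pow_congr (ordGe_X 0) (ordGe_X 0)
          (ordGe_sub_self 2 _) hordH hordL hlin (by rw [deg_e3]; try omega)
      rw [hcongr, coeff_B3, if_neg, mul_zero]
      rintro ⟨h1, h2⟩
      exact hne (by rw [← h1, ← h2])
    · rw [ordGe_pow_mul_pow (ordGe_X 0) hordH i j (e3 a b c) (by rw [deg_e3]; try omega), mul_zero]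
  · intro h
    exact absurd (by simp only [Finset.mem_product, Finset.mem_range]; omega) h

lemma extract3 (P : MvPowerSeries (Fin 2) R) {a b c : ℕ} (hc : 1 ≤ c) :
    MvPowerSeries.coeff (e3 a b c)
      (subst2 P (MvPowerSeries.X 0) (MvPowerSeries.X 1)) = 0 := by
  classical
  rw [coeff_subst2_def]
  apply Finset.sum_eq_zero
  rintro ⟨i, j⟩ _
  rw [coeff_B4, if_neg, mul_zero]
  rintro ⟨_, _, h3⟩
  omega

lemma extract4 (P : MvPowerSeries (Fin 2) R) {a b c : ℕ} (ha : 1 ≤ a) :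
    MvPowerSeries.coeff (e3 a b c)
      (subst2 P (MvPowerSeries.X 1) (MvPowerSeries.X 2)) = 0 := by
  classical
  rw [coeff_subst2_def]
  apply Finset.sum_eq_zero
  rintro ⟨i, j⟩ _
  rw [coeff_B5, if_neg, mul_zero]
  rintro ⟨h1, _, _⟩
  omega

/-! ### The logarithm coefficients -/

lemma nat_cancel [Algebra ℚ R] {a : ℕ} (ha : a ≠ 0) {x : R} (h : (a : R) * x = 0) : x = 0 := by
  have hmap : algebraMap ℚ R (1 / (a : ℚ)) * (a : R) = 1 := by
    rw [show ((a : ℕ) : R) = algebraMap ℚ R ((a : ℕ) : ℚ) from (map_natCast _ a).symm, ← map_mul]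
    rw [show (1 / (a : ℚ)) * ((a : ℕ) : ℚ) = 1 from by
      field_simp]
    exact map_one _
  have h2 : algebraMap ℚ R (1 / (a : ℚ)) * ((a : R) * x) = x := by
    rw [← mul_assoc, hmap, one_mul]
  rw [← h2, h, mul_zero]

variable [Algebra ℚ R]

noncomputable def lcoeff (F : MvPowerSeries (Fin 2) R) : ℕ → R
  | 0 => 0
  | 1 => 1
  | n + 2 => - algebraMap ℚ R (1 / (n + 2 : ℚ)) *
      ∑ k ∈ (Finset.range (n + 2)).attach,
        lcoeff F k.1 * MvPowerSeries.coeff (e2 1 (n + 1)) (F ^ (k.1 : ℕ))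
  decreasing_by exact Finset.mem_range.1 k.2

lemma lcoeff_zero (F : MvPowerSeries (Fin 2) R) : lcoeff F 0 = 0 := by rw [lcoeff]

lemma lcoeff_one (F : MvPowerSeries (Fin 2) R) : lcoeff F 1 = 1 := by rw [lcoeff]

lemma lcoeff_spec (F : MvPowerSeries (Fin 2) R) (m : ℕ) :
    ((m + 2 : ℕ) : R) * lcoeff F (m + 2)
      + ∑ k ∈ Finset.range (m + 2),
          lcoeff F k * MvPowerSeries.coeff (e2 1 (m + 1)) (F ^ k) = 0 := by
  rw [lcoeff]
  rw [Finset.sum_attach (Finset.range (m + 2))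
    (fun k => lcoeff F k * MvPowerSeries.coeff (e2 1 (m + 1)) (F ^ k))]
  have hmap : ((m + 2 : ℕ) : R) * algebraMap ℚ R (1 / (m + 2 : ℚ)) = 1 := by
    rw [show ((m + 2 : ℕ) : R) = algebraMap ℚ R ((m + 2 : ℕ) : ℚ) from (map_natCast _ _).symm,
      ← map_mul]
    rw [show ((m + 2 : ℕ) : ℚ) * (1 / (m + 2 : ℚ)) = 1 from by
      push_cast
      field_simp]
    exact map_one _
  set S := ∑ k ∈ Finset.range (m + 2),
    lcoeff F k * MvPowerSeries.coeff (e2 1 (m + 1)) (F ^ k) with hS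
  calc ((m + 2 : ℕ) : R) * (- algebraMap ℚ R (1 / (m + 2 : ℚ)) * S) + S
      = - (((m + 2 : ℕ) : R) * algebraMap ℚ R (1 / (m + 2 : ℚ))) * S + S := by ring
    _ = 0 := by rw [hmap]; ring

/-! ### key coefficient computations at the exponent `(1, m+1)` -/

variable {F : MvPowerSeries (Fin 2) R}

lemma F_sub_linear (hF : IsFGL F) :
    ordGe 2 (F - (MvPowerSeries.X 0 + MvPowerSeries.X 1 : MvPowerSeries (Fin 2) R)) := by
  intro u hu
  have hdeg : u 0 + u 1 < 2 := by rw [← deg_fin2]; omega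
  have hu2 := eq_e2 u
  have hX0 : ∀ p q : ℕ, MvPowerSeries.coeff (e2 p q) (MvPowerSeries.X 0 : MvPowerSeries (Fin 2) R)
      = if p = 1 ∧ q = 0 then 1 else 0 := by
    intro p q
    rw [← pow_one (MvPowerSeries.X 0 : MvPowerSeries (Fin 2) R), coeff_B6]
  have hX1 : ∀ p q : ℕ, MvPowerSeries.coeff (e2 p q) (MvPowerSeries.X 1 : MvPowerSeries (Fin 2) R)
      = if p = 0 ∧ q = 1 then 1 else 0 := by
    intro p q
    rw [← pow_one (MvPowerSeries.X 1 : MvPowerSeries (Fin 2) R), coeff_B7]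
  rw [map_sub, map_add, hu2, hX0, hX1]
  have hcases : (u 0 = 0 ∧ u 1 = 0) ∨ (u 0 = 1 ∧ u 1 = 0) ∨ (u 0 = 0 ∧ u 1 = 1) := by omega
  rcases hcases with ⟨h1, h2⟩ | ⟨h1, h2⟩ | ⟨h1, h2⟩ <;> rw [h1, h2]
  · rw [e2_zero_zero, F_coeff_zero hF]
    norm_num
  · rw [F_coeff_10 hF]
    norm_num
  · rw [F_coeff_01 hF]
    norm_num

lemma coeff_11_pow (hF : IsFGL F) (m : ℕ) :
    MvPowerSeries.coeff (e2 1 (m + 1)) (F ^ (m + 2)) = ((m + 2 : ℕ) : R) := by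
  have hconst : MvPowerSeries.constantCoeff F = 0 := by
    rw [← MvPowerSeries.coeff_zero_eq_constantCoeff]
    exact F_coeff_zero hF
  rw [coeff_pow_congr (ordGe_of_constantCoeff hconst)
    (ordGe_add (ordGe_X 0) (ordGe_X 1)) (F_sub_linear hF) (by rw [deg_e2]; omega)]
  rw [coeff_B1, if_pos (by omega), Nat.choose_one_right]

lemma coeff_11_subst1_X0 (f : PowerSeries R) (m : ℕ) :
    MvPowerSeries.coeff (e2 1 (m + 1))
      (subst1 f (MvPowerSeries.X 0 : MvPowerSeries (Fin 2) R)) = 0 := by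
  classical
  rw [coeff_subst1_X, if_neg]
  intro h
  have := congrArg (fun g => g (1 : Fin 2)) h
  simp [Finsupp.single_apply] at this

lemma coeff_11_subst1_X1 (f : PowerSeries R) (m : ℕ) :
    MvPowerSeries.coeff (e2 1 (m + 1))
      (subst1 f (MvPowerSeries.X 1 : MvPowerSeries (Fin 2) R)) = 0 := by
  classical
  rw [coeff_subst1_X, if_neg]
  intro h
  have := congrArg (fun g => g (0 : Fin 2)) h
  simp [Finsupp.single_apply] at this

lemma coeff_11_subst1 (f : PowerSeries R) (m : ℕ) :
    MvPowerSeries.coeff (e2 1 (m + 1)) (subst1 f F)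
      = (∑ k ∈ Finset.range (m + 2),
          PowerSeries.coeff k f * MvPowerSeries.coeff (e2 1 (m + 1)) (F ^ k))
        + PowerSeries.coeff (m + 2) f * MvPowerSeries.coeff (e2 1 (m + 1)) (F ^ (m + 2)) := by
  rw [coeff_subst1_def]
  have hdeg : deg (e2 1 (m + 1)) = m + 2 := by rw [deg_e2]; omega
  rw [hdeg]
  exact Finset.sum_range_succ _ (m + 2)
/-- Over a commutative `ℚ`-algebra `R`, every formal group law `F` admits a unique
power series `ℓ` with constant term `0` and linear coefficient `1` such that
`ℓ(F(X,Y)) = ℓ(X) + ℓ(Y)`, i.e. `F` is strictly isomorphic to the additive formal group law. -/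
theorem statement6 (R : Type*) [CommRing R] [Algebra ℚ R]
    (F : MvPowerSeries (Fin 2) R) (hF : IsFGL F) :
    ∃! ℓ : PowerSeries R,
      PowerSeries.constantCoeff ℓ = 0 ∧ PowerSeries.coeff 1 ℓ = 1 ∧
        subst1 ℓ F = subst1 ℓ (MvPowerSeries.X 0 : MvPowerSeries (Fin 2) R) +
          subst1 ℓ (MvPowerSeries.X 1 : MvPowerSeries (Fin 2) R) := by
  classical
  have hF0 : MvPowerSeries.coeff 0 F = 0 := F_coeff_zero hF
  set ℓ : PowerSeries R := PowerSeries.mk (lcoeff F) with hℓdef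
  have hc : ∀ k, PowerSeries.coeff k ℓ = lcoeff F k := fun k => PowerSeries.coeff_mk k _
  have hc0 : PowerSeries.constantCoeff ℓ = 0 := by
    rw [← PowerSeries.coeff_zero_eq_constantCoeff, hc 0, lcoeff_zero]
  have hc1 : PowerSeries.coeff 1 ℓ = 1 := by rw [hc 1, lcoeff_one]
  set E : MvPowerSeries (Fin 2) R := subst1 ℓ F - subst1 ℓ (MvPowerSeries.X 0)
    - subst1 ℓ (MvPowerSeries.X 1) with hEdef
  -- the key coefficients vanish by construction
  have P3 : ∀ m : ℕ, MvPowerSeries.coeff (e2 1 (m + 1)) E = 0 := by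
    intro m
    rw [hEdef, map_sub, map_sub, coeff_11_subst1_X0, coeff_11_subst1_X1,
      coeff_11_subst1 ℓ m, coeff_11_pow hF m, hc (m + 2),
      Finset.sum_congr rfl (fun k (_ : k ∈ Finset.range (m + 2)) => by rw [hc k])]
    linear_combination lcoeff_spec F m
  -- first column and first row of E vanish, by the unit axioms
  have hsub0 : subst1 ℓ (0 : MvPowerSeries ℕ R) = 0 := subst1_zero hc0
  have P1 : ∀ k, MvPowerSeries.coeff (e2 k 0) E = 0 := by
    have hzero : subst2 E (MvPowerSeries.X 0) (0 : MvPowerSeries ℕ R) = 0 := by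
      rw [hEdef, subst2_sub, subst2_sub,
        ← subst1_subst2 ℓ F hF0 (MvPowerSeries.constantCoeff_X 0) (map_zero _),
        hF.unit_left,
        subst2_subst1_X0 ℓ (MvPowerSeries.constantCoeff_X 0) (map_zero _),
        subst2_subst1_X1 ℓ (MvPowerSeries.constantCoeff_X 0) (map_zero _),
        hsub0]
      ring
    intro k
    have h := coeff_subst2_X_zero (0 : ℕ) E k
    rw [hzero, map_zero] at h
    exact h.symm
  have P2 : ∀ k, MvPowerSeries.coeff (e2 0 k) E = 0 := by
    have hzero : subst2 E (0 : MvPowerSeries ℕ R) (MvPowerSeries.X 1) = 0 := by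
      rw [hEdef, subst2_sub, subst2_sub,
        ← subst1_subst2 ℓ F hF0 (map_zero _) (MvPowerSeries.constantCoeff_X 1),
        hF.unit_right,
        subst2_subst1_X0 ℓ (map_zero _) (MvPowerSeries.constantCoeff_X 1),
        subst2_subst1_X1 ℓ (map_zero _) (MvPowerSeries.constantCoeff_X 1),
        hsub0]
      ring
    intro k
    have h := coeff_subst2_zero_X (1 : ℕ) E k
    rw [hzero, map_zero] at h
    exact h.symm
  -- the cocycle identity for E, from associativity
  set G : MvPowerSeries (Fin 3) R := subst2 F (MvPowerSeries.X 0) (MvPowerSeries.X 1) with hGdef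
  set H : MvPowerSeries (Fin 3) R := subst2 F (MvPowerSeries.X 1) (MvPowerSeries.X 2) with hHdef
  have hGconst : MvPowerSeries.constantCoeff G = 0 := by
    rw [hGdef, constantCoeff_subst2]; exact hF0
  have hHconst : MvPowerSeries.constantCoeff H = 0 := by
    rw [hHdef, constantCoeff_subst2]; exact hF0
  have expandF : subst1 ℓ F = E + subst1 ℓ (MvPowerSeries.X 0 : MvPowerSeries (Fin 2) R)
      + subst1 ℓ (MvPowerSeries.X 1 : MvPowerSeries (Fin 2) R) := by
    rw [hEdef]; ring
  have hinnerG : subst1 ℓ G = subst2 E (MvPowerSeries.X 0) (MvPowerSeries.X 1)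
      + subst1 ℓ (MvPowerSeries.X 0 : MvPowerSeries (Fin 3) R)
      + subst1 ℓ (MvPowerSeries.X 1 : MvPowerSeries (Fin 3) R) := by
    rw [hGdef, subst1_subst2 ℓ F hF0 (MvPowerSeries.constantCoeff_X 0)
        (MvPowerSeries.constantCoeff_X 1), expandF, subst2_add, subst2_add,
      subst2_subst1_X0 ℓ (MvPowerSeries.constantCoeff_X 0) (MvPowerSeries.constantCoeff_X 1),
      subst2_subst1_X1 ℓ (MvPowerSeries.constantCoeff_X 0) (MvPowerSeries.constantCoeff_X 1)]
  have hinnerH : subst1 ℓ H = subst2 E (MvPowerSeries.X 1) (MvPowerSeries.X 2)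
      + subst1 ℓ (MvPowerSeries.X 1 : MvPowerSeries (Fin 3) R)
      + subst1 ℓ (MvPowerSeries.X 2 : MvPowerSeries (Fin 3) R) := by
    rw [hHdef, subst1_subst2 ℓ F hF0 (MvPowerSeries.constantCoeff_X 1)
        (MvPowerSeries.constantCoeff_X 2), expandF, subst2_add, subst2_add,
      subst2_subst1_X0 ℓ (MvPowerSeries.constantCoeff_X 1) (MvPowerSeries.constantCoeff_X 2),
      subst2_subst1_X1 ℓ (MvPowerSeries.constantCoeff_X 1) (MvPowerSeries.constantCoeff_X 2)]
  have hL : subst1 ℓ (subst2 F G (MvPowerSeries.X 2)) = subst2 E G (MvPowerSeries.X 2)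
      + subst2 E (MvPowerSeries.X 0) (MvPowerSeries.X 1)
      + (subst1 ℓ (MvPowerSeries.X 0 : MvPowerSeries (Fin 3) R)
        + subst1 ℓ (MvPowerSeries.X 1 : MvPowerSeries (Fin 3) R)
        + subst1 ℓ (MvPowerSeries.X 2 : MvPowerSeries (Fin 3) R)) := by
    rw [subst1_subst2 ℓ F hF0 hGconst (MvPowerSeries.constantCoeff_X 2), expandF,
      subst2_add, subst2_add,
      subst2_subst1_X0 ℓ hGconst (MvPowerSeries.constantCoeff_X 2),
      subst2_subst1_X1 ℓ hGconst (MvPowerSeries.constantCoeff_X 2), hinnerG]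
    ring
  have hR : subst1 ℓ (subst2 F (MvPowerSeries.X 0) H) = subst2 E (MvPowerSeries.X 0) H
      + subst2 E (MvPowerSeries.X 1) (MvPowerSeries.X 2)
      + (subst1 ℓ (MvPowerSeries.X 0 : MvPowerSeries (Fin 3) R)
        + subst1 ℓ (MvPowerSeries.X 1 : MvPowerSeries (Fin 3) R)
        + subst1 ℓ (MvPowerSeries.X 2 : MvPowerSeries (Fin 3) R)) := by
    rw [subst1_subst2 ℓ F hF0 (MvPowerSeries.constantCoeff_X 0) hHconst, expandF,
      subst2_add, subst2_add,
      subst2_subst1_X0 ℓ (MvPowerSeries.constantCoeff_X 0) hHconst,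
      subst2_subst1_X1 ℓ (MvPowerSeries.constantCoeff_X 0) hHconst, hinnerH]
    ring
  have hco : subst2 E G (MvPowerSeries.X 2) + subst2 E (MvPowerSeries.X 0) (MvPowerSeries.X 1)
      = subst2 E (MvPowerSeries.X 0) H
        + subst2 E (MvPowerSeries.X 1) (MvPowerSeries.X 2) := by
    have hassoc := congrArg (subst1 ℓ) hF.assoc
    rw [← hGdef, ← hHdef, hL, hR] at hassoc
    exact add_right_cancel hassoc
  have hGlin : ordGe 2 (G - (MvPowerSeries.X 0 + MvPowerSeries.X 1 : MvPowerSeries (Fin 3) R)) := by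
    rw [hGdef]
    exact subst2_sub_linear hF (MvPowerSeries.constantCoeff_X 0) (MvPowerSeries.constantCoeff_X 1)
  have hHlin : ordGe 2 (H - (MvPowerSeries.X 1 + MvPowerSeries.X 2 : MvPowerSeries (Fin 3) R)) := by
    rw [hHdef]
    exact subst2_sub_linear hF (MvPowerSeries.constantCoeff_X 1) (MvPowerSeries.constantCoeff_X 2)
  -- main induction : E = 0
  have hEzero : ∀ n : ℕ, ∀ e : Fin 2 →₀ ℕ, deg e = n → MvPowerSeries.coeff e E = 0 := by
    intro n
    induction n using Nat.strong_induction_on with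
    | _ n IH =>
      intro e he
      have IH' : ∀ e' : Fin 2 →₀ ℕ, deg e' < n → MvPowerSeries.coeff e' E = 0 :=
        fun e' h' => IH (deg e') (by omega) e' rfl
      have he2 := eq_e2 e
      have hdeg2 : e 0 + e 1 = n := by rw [← deg_fin2, he]
      by_cases hb : e 1 = 0
      · rw [he2, hb]; exact P1 (e 0)
      · by_cases ha : e 0 = 0
        · rw [he2, ha]; exact P2 (e 1)
        · have hrec := congrArg (MvPowerSeries.coeff (e3 1 (e 0 - 1) (e 1))) hco
          rw [map_add, map_add,
            extract1 E IH' (show 1 + (e 0 - 1) + e 1 = n from by omega) hGconst hGlin,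
            extract2 E IH' (show 1 + (e 0 - 1) + e 1 = n from by omega) hHconst hHlin,
            extract3 E (show 1 ≤ e 1 from by omega),
            extract4 E (le_refl 1)] at hrec
          rw [show 1 + (e 0 - 1) = e 0 from by omega,
            show e 0 - 1 + e 1 = (n - 2) + 1 from by omega,
            P3 (n - 2), mul_zero, add_zero, add_zero, Nat.choose_one_right] at hrec
          rw [he2]
          exact nat_cancel ha hrec
  have hE0 : E = 0 := MvPowerSeries.ext fun d => by
    rw [map_zero]; exact hEzero (deg d) d rfl
  have hmain : subst1 ℓ F = subst1 ℓ (MvPowerSeries.X 0 : MvPowerSeries (Fin 2) R)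
      + subst1 ℓ (MvPowerSeries.X 1 : MvPowerSeries (Fin 2) R) := by
    have := hE0
    rw [hEdef, sub_sub, sub_eq_zero] at this
    exact this
  refine ⟨ℓ, ⟨hc0, hc1, hmain⟩, ?_⟩
  -- uniqueness
  intro y hy
  obtain ⟨hy0, hy1, hyeq⟩ := hy
  have hgeq : subst1 (y - ℓ) F
      = subst1 (y - ℓ) (MvPowerSeries.X 0 : MvPowerSeries (Fin 2) R)
        + subst1 (y - ℓ) (MvPowerSeries.X 1 : MvPowerSeries (Fin 2) R) := by
    rw [subst1_sub, subst1_sub, subst1_sub, hyeq, hmain]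
    ring
  have hg : ∀ k, PowerSeries.coeff k (y - ℓ) = 0 := by
    intro k
    induction k using Nat.strong_induction_on with
    | _ k IHk =>
      by_cases hk0 : k = 0
      · subst hk0
        rw [map_sub, PowerSeries.coeff_zero_eq_constantCoeff, hy0, hc0, sub_self]
      · by_cases hk1 : k = 1
        · subst hk1
          rw [map_sub, hy1, hc1, sub_self]
        · obtain ⟨m, rfl⟩ : ∃ m, k = m + 2 := ⟨k - 2, by omega⟩
          have hco2 := congrArg (MvPowerSeries.coeff (e2 1 (m + 1))) hgeq
          rw [coeff_11_subst1 (y - ℓ) m, map_add, coeff_11_subst1_X0, coeff_11_subst1_X1,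
            coeff_11_pow hF m,
            Finset.sum_eq_zero (fun k hk => by
              rw [IHk k (by simpa using hk), zero_mul]),
            zero_add, add_zero] at hco2
          rw [mul_comm] at hco2
          exact nat_cancel (by omega) hco2
  have hsub : y - ℓ = 0 := PowerSeries.ext fun k => by rw [map_zero]; exact hg k
  exact sub_eq_zero.1 hsub

end FGL
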